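/- If X is a subset of a metric space Z, D ⊆ Z is countable, Y is a metric space, and π : X → Y is continuous, then π extends to a function ρ : X ∪ D → Y which is Borel measurable (indeed of class F_σ: preimages of open sets are relatively F_σ in X ∪ D). -/

import Mathlib

open Set Filter Topology ENNReal

section FsigmaAux

variable {α : Type*} [TopologicalSpace α]

def IsFsigma (s : Set α) : Prop :=
  ∃ C : ℕ → Set α, (∀ n, IsClosed (C n)) ∧ s = ⋃ n, C n

theorem IsClosed.isFsigma {s : Set α} (h : IsClosed s) : IsFsigma s :=
  ⟨fun _ => s, fun _ => h, (iUnion_const s).symm⟩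

theorem isFsigma_of_countable [T1Space α] {s : Set α} (h : s.Countable) : IsFsigma s := by
  rcases s.eq_empty_or_nonempty with rfl | hne
  · exact ⟨fun _ => ∅, fun _ => isClosed_empty, by simp⟩
  · obtain ⟨f, rfl⟩ := h.exists_eq_range hne
    exact ⟨fun n => {f n}, fun n => isClosed_singleton, (iUnion_singleton_eq_range f).symm⟩

theorem IsFsigma.union {s t : Set α} (hs : IsFsigma s) (ht : IsFsigma t) : IsFsigma (s ∪ t) := by
  obtain ⟨C, hC, rfl⟩ := hs
  obtain ⟨C', hC', rfl⟩ := ht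
  exact ⟨fun n => C n ∪ C' n, fun n => (hC n).union (hC' n),
    (iUnion_union_distrib C C').symm⟩

theorem IsFsigma.iUnion {f : ℕ → Set α} (h : ∀ k, IsFsigma (f k)) : IsFsigma (⋃ k, f k) := by
  choose C hC hCeq using h
  refine ⟨fun n => C (Nat.unpair n).1 (Nat.unpair n).2, fun n => hC _ _, ?_⟩
  ext x
  simp only [mem_iUnion, hCeq]
  constructor
  · rintro ⟨k, m, hx⟩
    exact ⟨Nat.pair k m, by simpa [Nat.unpair_pair] using hx⟩
  · rintro ⟨n, hx⟩
    exact ⟨(Nat.unpair n).1, (Nat.unpair n).2, hx⟩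

end FsigmaAux

section MetricAux

variable {β : Type*} [MetricSpace β]

theorem isFsigma_of_isOpen {U : Set β} (h : IsOpen U) : IsFsigma U := by
  refine ⟨fun n => {x | (n : ℝ≥0∞)⁻¹ ≤ EMetric.infEdist x Uᶜ},
    fun n => isClosed_le continuous_const EMetric.continuous_infEdist, ?_⟩
  ext x
  simp only [mem_iUnion, mem_setOf_eq]
  constructor
  · intro hx
    have h0 : EMetric.infEdist x Uᶜ ≠ 0 := by
      intro h0
      have hc : x ∈ closure Uᶜ := EMetric.mem_closure_iff_infEdist_zero.mpr h0
      rw [h.isClosed_compl.closure_eq] at hc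
      exact hc hx
    obtain ⟨n, hn⟩ := ENNReal.exists_inv_nat_lt h0
    exact ⟨n, hn.le⟩
  · rintro ⟨n, hn⟩
    by_contra hx
    have : EMetric.infEdist x Uᶜ = 0 := EMetric.infEdist_zero_of_mem hx
    rw [this, nonpos_iff_eq_zero, ENNReal.inv_eq_zero] at hn
    exact (ENNReal.natCast_ne_top n) hn

theorem isFsigma_closed_inter_open {s U : Set β} (hs : IsClosed s) (hU : IsOpen U) :
    IsFsigma (s ∩ U) := by
  obtain ⟨C, hC, rfl⟩ := isFsigma_of_isOpen hU
  exact ⟨fun n => s ∩ C n, fun n => hs.inter (hC n), by rw [inter_iUnion]⟩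

end MetricAux

section Construction

variable {Z Y : Type*} [MetricSpace Z] [MetricSpace Y]

open Classical in
noncomputable def stmtEps (X D : Set Z) (ι : ↥(D \ X) → ℕ) (z : Z) : ℝ :=
  if h : z ∈ D \ X then ((ι ⟨z, h⟩ : ℝ) + 1)⁻¹ else 1

theorem stmtEps_pos (X D : Set Z) (ι : ↥(D \ X) → ℕ) (z : Z) : 0 < stmtEps X D ι z := by
  unfold stmtEps
  split <;> positivity

theorem stmtEps_tendsto {X D : Set Z} {ι : ↥(D \ X) → ℕ} (hι : Function.Injective ι)
    (b : ℕ → Z) (hb : ∀ j, b j ∈ D \ X) {z : Z} (hz : z ∈ X)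
    (hbz : Tendsto b atTop (𝓝 z)) :
    Tendsto (fun j => stmtEps X D ι (b j)) atTop (𝓝 0) := by
  have hn : Tendsto (fun j => ι ⟨b j, hb j⟩) atTop atTop := by
    rw [tendsto_atTop]
    intro N
    rw [← Nat.cofinite_eq_atTop, eventually_cofinite]
    by_contra hinf
    have hS : {j | ¬N ≤ ι ⟨b j, hb j⟩}.Infinite := hinf
    have hF : (ι ⁻¹' Set.Iio N).Finite :=
      Set.Finite.preimage hι.injOn (Set.finite_Iio N)
    have hsub : {j | ¬N ≤ ι ⟨b j, hb j⟩} ⊆ ⋃ d ∈ ι ⁻¹' Set.Iio N, {j | b j = ↑d} := by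
      intro j hj
      exact Set.mem_biUnion (show ι ⟨b j, hb j⟩ ∈ Set.Iio N from not_le.mp hj) rfl
    have hex : ∃ d ∈ ι ⁻¹' Set.Iio N, {j | b j = ↑d}.Infinite := by
      by_contra hno
      push_neg at hno
      exact hS ((hF.biUnion fun d hd => (hno d hd)).subset hsub)
    obtain ⟨d, _, hdinf⟩ := hex
    have hne : (↑d : Z) ≠ z := fun h => d.2.2 (h ▸ hz)
    have hpos : 0 < dist (↑d : Z) z := dist_pos.mpr hne
    have hev : ∀ᶠ j in atTop, dist (b j) z < dist (↑d : Z) z :=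
      Metric.tendsto_nhds.mp hbz _ hpos
    have hfreq : ∃ᶠ j in atTop, b j = ↑d := Nat.frequently_atTop_iff_infinite.mpr hdinf
    obtain ⟨j, hj1, hj2⟩ := (hfreq.and_eventually hev).exists
    rw [hj1] at hj2
    exact lt_irrefl _ hj2
  have h2 : Tendsto (fun j => ((ι ⟨b j, hb j⟩ : ℝ) + 1)⁻¹) atTop (𝓝 0) := by
    apply Filter.Tendsto.inv_tendsto_atTop
    exact tendsto_atTop_add_const_right _ 1 (tendsto_natCast_atTop_atTop.comp hn)
  refine h2.congr fun j => ?_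
  rw [stmtEps, dif_pos (hb j)]

open Classical in
noncomputable def stmtExt (X D : Set Z) (π : ↥X → Y) (ι : ↥(D \ X) → ℕ) (y₀ : Y)
    (a : ↥(X ∪ D)) : Y :=
  if h : (a : Z) ∈ X then π ⟨a, h⟩
  else if h2 : ∃ x : ↥X, dist (x : Z) (a : Z) < stmtEps X D ι (a : Z) then π h2.choose else y₀

theorem stmtExt_mem {X D : Set Z} {π : ↥X → Y} {ι : ↥(D \ X) → ℕ} {y₀ : Y}
    {a : ↥(X ∪ D)} (h : (a : Z) ∈ X) : stmtExt X D π ι y₀ a = π ⟨a, h⟩ := dif_pos h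

theorem stmtExt_not_mem {X D : Set Z} {π : ↥X → Y} {ι : ↥(D \ X) → ℕ} {y₀ : Y}
    {a : ↥(X ∪ D)} (h : (a : Z) ∉ X)
    (h2 : ∃ x : ↥X, dist (x : Z) (a : Z) < stmtEps X D ι (a : Z)) :
    ∃ x : ↥X, dist (x : Z) (a : Z) < stmtEps X D ι (a : Z) ∧ stmtExt X D π ι y₀ a = π x :=
  ⟨h2.choose, h2.choose_spec, by rw [stmtExt, dif_neg h, dif_pos h2]⟩

end Construction

theorem stmt18 {Z Y : Type*} [MetricSpace Z] [MetricSpace Y] [Nonempty Y]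
    (X D : Set Z) (hD : D.Countable) (π : X → Y) (hπ : Continuous π) :
    ∃ ρ : ↑(X ∪ D) → Y,
      (∀ (x : Z) (hx : x ∈ X), ρ ⟨x, Set.mem_union_left D hx⟩ = π ⟨x, hx⟩) ∧
      (∀ O : Set Y, IsOpen O → ∃ C : ℕ → Set ↑(X ∪ D),
        (∀ n, IsClosed (C n)) ∧ ρ ⁻¹' O = ⋃ n, C n) := by
  classical
  obtain ⟨ι, hι⟩ := Set.countable_iff_exists_injective.mp (hD.mono Set.diff_subset)
  set ρ : ↥(X ∪ D) → Y := stmtExt X D π ι (Classical.arbitrary Y) with hρdef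
  refine ⟨ρ, fun x hx => stmtExt_mem hx, ?_⟩
  intro O hO
  suffices h : IsFsigma (ρ ⁻¹' O) from h
  -- the approximating open sets
  set Ok : ℕ → Set Y := fun k => {y | (k : ℝ≥0∞)⁻¹ < EMetric.infEdist y Oᶜ} with hOk
  have hOkO : ∀ k, closure (Ok k) ⊆ O := by
    intro k y hy
    have h1 : (k : ℝ≥0∞)⁻¹ ≤ EMetric.infEdist y Oᶜ := by
      have hcl : closure (Ok k) ⊆ {y | (k : ℝ≥0∞)⁻¹ ≤ EMetric.infEdist y Oᶜ} :=
        closure_minimal (fun y (hy : (k : ℝ≥0∞)⁻¹ < EMetric.infEdist y Oᶜ) =>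
          (le_of_lt hy : (k : ℝ≥0∞)⁻¹ ≤ EMetric.infEdist y Oᶜ))
          (isClosed_le continuous_const EMetric.continuous_infEdist)
      exact hcl hy
    by_contra hyO
    rw [(show EMetric.infEdist y Oᶜ = 0 from EMetric.infEdist_zero_of_mem (show y ∈ Oᶜ from hyO)), nonpos_iff_eq_zero,
      ENNReal.inv_eq_zero] at h1
    exact (ENNReal.natCast_ne_top k) h1
  have hOcover : ∀ y ∈ O, ∃ k, y ∈ Ok k := by
    intro y hy
    have h0 : EMetric.infEdist y Oᶜ ≠ 0 := by
      intro h0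
      have hc : y ∈ closure Oᶜ := EMetric.mem_closure_iff_infEdist_zero.mpr h0
      rw [hO.isClosed_compl.closure_eq] at hc
      exact hc hy
    obtain ⟨k, hk⟩ := ENNReal.exists_inv_nat_lt h0
    exact ⟨k, hk⟩
  -- inclusion of X into X ∪ D
  set inc : ↥X → ↥(X ∪ D) := fun x => ⟨x, Set.mem_union_left D x.2⟩ with hinc
  set P : ℕ → Set ↥(X ∪ D) := fun k => inc '' (π ⁻¹' Ok k) with hP
  -- points of X in the closure of P k are mapped into O
  have hPS : ∀ k, ∀ a ∈ closure (P k), (a : Z) ∈ X → ρ a ∈ O := by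
    intro k a ha haX
    obtain ⟨p, hp, hptend⟩ := mem_closure_iff_seq_limit.mp ha
    choose q hq1 hq2 using hp
    have hqa : Tendsto q atTop (𝓝 ⟨(a : Z), haX⟩) := by
      rw [tendsto_subtype_rng]
      have hv : Tendsto (fun j => ((p j : Z))) atTop (𝓝 (a : Z)) :=
        (continuous_subtype_val.tendsto a).comp hptend
      refine hv.congr fun j => ?_
      rw [← hq2 j]
    have hπq : Tendsto (fun j => π (q j)) atTop (𝓝 (π ⟨(a : Z), haX⟩)) :=
      (hπ.tendsto _).comp hqa
    have hmem : π ⟨(a : Z), haX⟩ ∈ closure (Ok k) :=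
      mem_closure_of_tendsto hπq (Eventually.of_forall hq1)
    rw [hρdef, stmtExt_mem haX]
    exact hOkO k hmem
  set B : ℕ → Set ↥(X ∪ D) := fun k => closure (P k) \ ρ ⁻¹' O with hB
  have hBD : ∀ k, ∀ a ∈ B k, (a : Z) ∈ D \ X := by
    intro k a ha
    have hnX : (a : Z) ∉ X := fun hX => ha.2 (hPS k a ha.1 hX)
    rcases a.2 with h | h
    · exact absurd h hnX
    · exact ⟨h, hnX⟩
  -- key lemma
  have hkey : ∀ k, ∀ a : ↥(X ∪ D), (a : Z) ∈ X → a ∈ closure (B k) → ρ a ∉ O := by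
    intro k a haX hacl haO
    obtain ⟨b, hbB, hbt⟩ := mem_closure_iff_seq_limit.mp hacl
    have hbD : ∀ j, ((b j : Z)) ∈ D \ X := fun j => hBD k (b j) (hbB j)
    have hbX : ∀ j, ∃ x : ↥X, dist (x : Z) ((b j : Z)) < stmtEps X D ι (b j : Z) := by
      intro j
      obtain ⟨p, hpP, hpd⟩ := Metric.mem_closure_iff.mp (hbB j).1 _ (stmtEps_pos X D ι (b j : Z))
      obtain ⟨x, _, hx2⟩ := hpP
      refine ⟨x, ?_⟩
      have : dist ((b j : Z)) ((p : Z)) < stmtEps X D ι (b j : Z) := by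
        rwa [Subtype.dist_eq] at hpd
      rw [← hx2] at this
      rw [dist_comm]
      exact this
    choose xj hxd hxρ using fun j => stmtExt_not_mem (π := π) (y₀ := Classical.arbitrary Y)
      ((hbD j).2) (hbX j)
    have hbO : ∀ j, π (xj j) ∉ O := by
      intro j hmem
      exact (hbB j).2 (by rw [hρdef, Set.mem_preimage, hxρ j]; exact hmem)
    have hbvt : Tendsto (fun j => ((b j : Z))) atTop (𝓝 (a : Z)) :=
      (continuous_subtype_val.tendsto a).comp hbt
    have hepst := stmtEps_tendsto hι (fun j => ((b j : Z))) hbD haX hbvt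
    have hxt : Tendsto (fun j => ((xj j : Z))) atTop (𝓝 (a : Z)) := by
      rw [tendsto_iff_dist_tendsto_zero]
      have hub : ∀ j, dist ((xj j : Z)) (a : Z) ≤
          stmtEps X D ι (b j : Z) + dist ((b j : Z)) (a : Z) := fun j =>
        (dist_triangle _ _ _).trans (add_le_add (hxd j).le le_rfl)
      have hlim : Tendsto (fun j => stmtEps X D ι (b j : Z) + dist ((b j : Z)) (a : Z))
          atTop (𝓝 0) := by
        have := hepst.add (tendsto_iff_dist_tendsto_zero.mp hbvt)
        simpa using this
      exact squeeze_zero (fun j => dist_nonneg) hub hlim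
    have hπt : Tendsto (fun j => π (xj j)) atTop (𝓝 (π ⟨(a : Z), haX⟩)) :=
      (hπ.tendsto _).comp (tendsto_subtype_rng.mpr hxt)
    have haO' : π ⟨(a : Z), haX⟩ ∈ O := by rwa [hρdef, stmtExt_mem haX] at haO
    have hev : ∀ᶠ j in atTop, π (xj j) ∈ O := hπt (hO.mem_nhds haO')
    obtain ⟨j, hj⟩ := hev.exists
    exact hbO j hj
  -- decomposition
  have hdecomp : ρ ⁻¹' O =
      (ρ ⁻¹' O ∩ {a : ↥(X ∪ D) | (a : Z) ∉ X}) ∪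
        ⋃ k, (closure (P k) ∩ (closure (B k))ᶜ) := by
    ext a
    constructor
    · intro ha
      by_cases hX : (a : Z) ∈ X
      · right
        have haO : π ⟨(a : Z), hX⟩ ∈ O := by rwa [hρdef, Set.mem_preimage, stmtExt_mem hX] at ha
        obtain ⟨k, hk⟩ := hOcover _ haO
        refine Set.mem_iUnion.mpr ⟨k, ⟨subset_closure ⟨⟨(a : Z), hX⟩, hk, Subtype.ext rfl⟩, ?_⟩⟩
        intro hclB
        exact hkey k a hX hclB ha
      · left; exact ⟨ha, hX⟩
    · rintro (⟨h, _⟩ | h)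
      · exact h
      · obtain ⟨k, hE, hBc⟩ := Set.mem_iUnion.mp h
        by_contra haO
        exact hBc (subset_closure ⟨hE, haO⟩)
  rw [hdecomp]
  refine IsFsigma.union (isFsigma_of_countable ?_) (IsFsigma.iUnion fun k =>
    isFsigma_closed_inter_open isClosed_closure isClosed_closure.isOpen_compl)
  have hsub : (ρ ⁻¹' O ∩ {a : ↥(X ∪ D) | (a : Z) ∉ X}) ⊆ Subtype.val ⁻¹' D := by
    rintro a ⟨_, hnX⟩
    rcases a.2 with h | h
    · exact absurd h hnX
    · exact h
  exact (hD.preimage Subtype.val_injective).mono hsub
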